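/- Consider in ℝ³ the vector fields f(x) = ((3/2)(x¹)² if x¹ < 0, (x¹)² if x¹ ≥ 0) ∂/∂x² + ∂/∂x³ and g = ∂/∂x¹. Then f is C^{1,1} but not C², and the set-valued step-3 bracket at any point with x¹ = 0 equals [g,[f,g]]_set(0, x², x³) = { α ∂/∂x² : α ∈ [−3, −2] }. -/

import Mathlib

open Set Filter Topology

/-- The pointwise Lie bracket `[X,Y] = DY·X − DX·Y` on ℝ³ = ℝ×ℝ×ℝ. -/
noncomputable def lieBracket (X Y : ℝ × ℝ × ℝ → ℝ × ℝ × ℝ) :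
    ℝ × ℝ × ℝ → ℝ × ℝ × ℝ :=
  fun x => fderiv ℝ Y x (X x) - fderiv ℝ X x (Y x)

/-- The step-3 set-valued bracket `[Z,[X,Y]]_set`. -/
noncomputable def setLieBracket3 (X Y Z : ℝ × ℝ × ℝ → ℝ × ℝ × ℝ) (x : ℝ × ℝ × ℝ) :
    Set (ℝ × ℝ × ℝ) :=
  convexHull ℝ {v | ∃ u w : ℕ → ℝ × ℝ × ℝ,
    (∀ k, DifferentiableAt ℝ (lieBracket X Y) (u k)) ∧
    (∀ k, DifferentiableAt ℝ Z (w k)) ∧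
    Tendsto u atTop (𝓝 x) ∧ Tendsto w atTop (𝓝 x) ∧
    Tendsto (fun k =>
      fderiv ℝ (lieBracket X Y) (u k) (Z (w k)) -
      fderiv ℝ Z (w k) (lieBracket X Y (u k))) atTop (𝓝 v)}

noncomputable def fEx : ℝ × ℝ × ℝ → ℝ × ℝ × ℝ :=
  fun x => (0, (if x.1 < 0 then (3/2) * x.1^2 else x.1^2, 1))

def gEx : ℝ × ℝ × ℝ → ℝ × ℝ × ℝ := fun _ => (1, (0, 0))

/-! ### Auxiliary definitions -/

noncomputable def phi : ℝ → ℝ := fun t => if t < 0 then (3/2) * t^2 else t^2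
noncomputable def phi' : ℝ → ℝ := fun t => if t < 0 then 3*t else 2*t

lemma hasDerivAt_phi (t : ℝ) : HasDerivAt phi (phi' t) t := by
  rcases lt_trichotomy t 0 with ht | ht | ht
  · have h1 : HasDerivAt (fun s : ℝ => (3/2) * s^2) ((3/2) * (2*t)) t := by
      simpa using ((hasDerivAt_pow 2 t).const_mul (3/2 : ℝ))
    have h2 : phi' t = (3/2) * (2*t) := by simp [phi', if_pos ht]; ring
    rw [h2]
    apply h1.congr_of_eventuallyEq
    filter_upwards [IsOpen.mem_nhds isOpen_Iio ht] with s hs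
    have hs' : s < 0 := hs
    simp only [phi]
    rw [if_pos hs']
  · subst ht
    have h0 : phi' 0 = 0 := by simp [phi']
    rw [h0, hasDerivAt_iff_isLittleO]
    rw [Asymptotics.isLittleO_iff]
    intro c hc
    have h23 : (0:ℝ) < (2/3) * c := by positivity
    filter_upwards [Metric.ball_mem_nhds (0:ℝ) h23] with s hs
    simp only [Metric.mem_ball, Real.dist_eq, sub_zero] at hs
    have hbound : |phi s| ≤ (3/2) * s^2 := by
      unfold phi
      split_ifs with h
      · rw [abs_of_nonneg (by positivity)]
      · rw [abs_of_nonneg (by positivity)]; nlinarith [sq_nonneg s]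
    have hphi0 : phi 0 = 0 := by simp [phi]
    have hmain : ‖phi s - phi 0 - (s - 0) • (0:ℝ)‖ ≤ c * ‖s - 0‖ := by
      rw [hphi0, smul_zero, sub_zero, sub_zero, sub_zero, Real.norm_eq_abs,
        Real.norm_eq_abs]
      calc |phi s| ≤ (3/2) * s^2 := hbound
        _ = (3/2) * |s| * |s| := by rw [sq, ← abs_mul_abs_self]; ring
        _ ≤ (3/2) * ((2/3)*c) * |s| := by
            apply mul_le_mul_of_nonneg_right _ (abs_nonneg s)
            exact mul_le_mul_of_nonneg_left hs.le (by norm_num)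
        _ = c * |s| := by ring
    simpa using hmain
  · have h1 : HasDerivAt (fun s : ℝ => s^2) (2*t) t := by
      simpa using (hasDerivAt_pow 2 t)
    have h2 : phi' t = 2*t := by simp [phi', if_neg (not_lt.mpr ht.le)]
    rw [h2]
    apply h1.congr_of_eventuallyEq
    filter_upwards [IsOpen.mem_nhds isOpen_Ioi ht] with s hs
    simp [phi, if_neg (not_lt.mpr (le_of_lt (mem_Ioi.mp hs)))]

noncomputable def Lc (c : ℝ) : ℝ × ℝ × ℝ →L[ℝ] ℝ × ℝ × ℝ :=
  (0 : ℝ × ℝ × ℝ →L[ℝ] ℝ).prod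
    ((c • (ContinuousLinearMap.fst ℝ ℝ (ℝ × ℝ))).prod (0 : ℝ × ℝ × ℝ →L[ℝ] ℝ))

lemma Lc_apply (c : ℝ) (x : ℝ × ℝ × ℝ) : Lc c x = (0, (c * x.1, 0)) := by
  simp [Lc, smul_eq_mul]

lemma hasFDerivAt_fEx (x : ℝ × ℝ × ℝ) : HasFDerivAt fEx (Lc (phi' x.1)) x := by
  have h2 : HasFDerivAt (phi ∘ Prod.fst)
      (phi' x.1 • ContinuousLinearMap.fst ℝ ℝ (ℝ × ℝ)) x :=
    (hasDerivAt_phi x.1).comp_hasFDerivAt x hasFDerivAt_fst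
  exact HasFDerivAt.prodMk (hasFDerivAt_const (0:ℝ) x) (h2.prodMk (hasFDerivAt_const (1:ℝ) x))

lemma fderiv_fEx (x : ℝ × ℝ × ℝ) : fderiv ℝ fEx x = Lc (phi' x.1) :=
  (hasFDerivAt_fEx x).fderiv

lemma Lc_sub (a b : ℝ) : Lc a - Lc b = Lc (a - b) := by
  refine ContinuousLinearMap.ext fun x => ?_
  simp only [ContinuousLinearMap.sub_apply, Lc_apply, Prod.mk_sub_mk, Prod.mk.injEq]
  refine ⟨by ring, by ring, by ring⟩

lemma Lc_norm_le (c : ℝ) : ‖Lc c‖ ≤ |c| := by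
  apply ContinuousLinearMap.opNorm_le_bound _ (abs_nonneg c)
  intro x
  rw [Lc_apply]
  have h1 : ‖((0:ℝ), (c * x.1, (0:ℝ)))‖ = |c * x.1| := by
    simp [Prod.norm_def, Real.norm_eq_abs, abs_mul]
    positivity
  have h2 : |x.1| ≤ ‖x‖ := by
    have := norm_fst_le x
    rwa [Real.norm_eq_abs] at this
  rw [h1, abs_mul]
  exact mul_le_mul_of_nonneg_left h2 (abs_nonneg c)

lemma phi'_lip (s t : ℝ) : |phi' s - phi' t| ≤ 3 * |s - t| := by
  unfold phi'
  split_ifs with h1 h2 h2 <;>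
  rcases abs_cases (s - t) with ⟨h, h'⟩ | ⟨h, h'⟩ <;>
  rw [h, abs_le] <;> constructor <;> linarith

lemma not_diff_phi' : ¬ DifferentiableAt ℝ phi' 0 := by
  intro h
  apply not_differentiableAt_abs_zero
  have habs : (fun t : ℝ => |t|) = fun t => 5*t - 2*phi' t := by
    funext t
    unfold phi'
    split_ifs with ht
    · rw [abs_of_neg ht]; ring
    · rw [abs_of_nonneg (le_of_not_gt ht)]; ring
  show DifferentiableAt ℝ (fun t : ℝ => |t|) 0
  rw [habs]
  exact ((differentiableAt_id.const_mul 5).sub (h.const_mul 2))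

/-- The bracket `[fEx, gEx]`. -/
noncomputable def bEx : ℝ × ℝ × ℝ → ℝ × ℝ × ℝ :=
  fun y => ((0:ℝ), (-(phi' y.1), (0:ℝ)))

lemma hbr : lieBracket fEx gEx = bEx := by
  funext x
  unfold lieBracket bEx
  rw [fderiv_fEx]
  have hg : fderiv ℝ gEx x = 0 := fderiv_const_apply _
  rw [hg]
  show (0:ℝ×ℝ×ℝ) - Lc (phi' x.1) (1,(0,0)) = _
  rw [Lc_apply]
  simp

lemma hasFDerivAt_bEx_neg {x : ℝ × ℝ × ℝ} (hx : x.1 < 0) :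
    HasFDerivAt bEx (Lc (-3)) x := by
  have hlin : HasFDerivAt (fun y : ℝ×ℝ×ℝ => Lc (-3) y) (Lc (-3)) x :=
    (Lc (-3)).hasFDerivAt
  apply hlin.congr_of_eventuallyEq
  have hopen : {y : ℝ×ℝ×ℝ | y.1 < 0} ∈ 𝓝 x :=
    IsOpen.mem_nhds (isOpen_lt continuous_fst continuous_const) hx
  filter_upwards [hopen] with y hy
  rw [Lc_apply]
  unfold bEx phi'
  rw [if_pos hy]
  norm_num

lemma hasFDerivAt_bEx_pos {x : ℝ × ℝ × ℝ} (hx : 0 < x.1) :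
    HasFDerivAt bEx (Lc (-2)) x := by
  have hlin : HasFDerivAt (fun y : ℝ×ℝ×ℝ => Lc (-2) y) (Lc (-2)) x :=
    (Lc (-2)).hasFDerivAt
  apply hlin.congr_of_eventuallyEq
  have hopen : {y : ℝ×ℝ×ℝ | 0 < y.1} ∈ 𝓝 x :=
    IsOpen.mem_nhds (isOpen_lt continuous_const continuous_fst) hx
  filter_upwards [hopen] with y hy
  rw [Lc_apply]
  unfold bEx phi'
  rw [if_neg (not_lt.mpr hy.le)]
  norm_num

lemma not_diff_bEx {x : ℝ × ℝ × ℝ} (hx : x.1 = 0) :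
    ¬ DifferentiableAt ℝ bEx x := by
  intro h
  apply not_diff_phi'
  have hγ : DifferentiableAt ℝ (fun t : ℝ => ((t, x.2) : ℝ×ℝ×ℝ)) 0 :=
    DifferentiableAt.prodMk differentiableAt_id (differentiableAt_const _)
  have hx0 : x = ((0:ℝ), x.2) := by
    rw [← hx]
  have h' : DifferentiableAt ℝ bEx (((0:ℝ), x.2) : ℝ×ℝ×ℝ) := hx0 ▸ h
  have hcomp : DifferentiableAt ℝ (bEx ∘ fun t : ℝ => ((t, x.2) : ℝ×ℝ×ℝ)) 0 :=
    DifferentiableAt.comp 0 h' hγ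
  have hcomp2 : DifferentiableAt ℝ (fun t : ℝ => -(phi' t)) 0 := by
    have := hcomp.snd.fst
    exact this
  have : phi' = fun t => -(-(phi' t)) := by funext t; ring
  rw [this]
  exact hcomp2.neg

theorem stmt_13 :
    Differentiable ℝ fEx ∧ LocallyLipschitz (fderiv ℝ fEx) ∧
    ¬ ContDiff ℝ 2 fEx ∧
    ∀ x2 x3 : ℝ,
      setLieBracket3 fEx gEx gEx (0, (x2, x3)) =
        {v : ℝ × ℝ × ℝ | ∃ α ∈ Icc (-3:ℝ) (-2), v = (0, (α, 0))} := by
  refine ⟨fun x => (hasFDerivAt_fEx x).differentiableAt, ?_, ?_, ?_⟩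
  · -- locally Lipschitz derivative
    apply LipschitzWith.locallyLipschitz (K := 3)
    apply LipschitzWith.of_dist_le_mul
    intro x y
    rw [fderiv_fEx, fderiv_fEx, dist_eq_norm, Lc_sub]
    calc ‖Lc (phi' x.1 - phi' y.1)‖ ≤ |phi' x.1 - phi' y.1| := Lc_norm_le _
      _ ≤ 3 * |x.1 - y.1| := phi'_lip _ _
      _ ≤ 3 * ‖x - y‖ := by
          apply mul_le_mul_of_nonneg_left _ (by norm_num)
          have : |x.1 - y.1| = ‖(x - y).1‖ := by rw [Real.norm_eq_abs]; rfl
          rw [this]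
          exact norm_fst_le (x - y)
      _ = (3:NNReal) * dist x y := by rw [dist_eq_norm]; norm_num
  · -- not C²
    intro h
    apply not_diff_phi'
    have h1 : ContDiff ℝ 1 (fderiv ℝ fEx) := h.fderiv_right (by norm_num)
    have hA : DifferentiableAt ℝ (fderiv ℝ fEx) ((0:ℝ),((0:ℝ),(0:ℝ))) :=
      (h1.differentiable one_ne_zero).differentiableAt
    have hγ : DifferentiableAt ℝ (fun t : ℝ => ((t,((0:ℝ),(0:ℝ))) : ℝ×ℝ×ℝ)) 0 :=
      DifferentiableAt.prodMk differentiableAt_id (differentiableAt_const _)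
    have hcomp : DifferentiableAt ℝ
        (fun t : ℝ => fderiv ℝ fEx ((t,((0:ℝ),(0:ℝ))))) 0 :=
      DifferentiableAt.comp 0 hA hγ
    have happ : DifferentiableAt ℝ
        (fun t : ℝ => fderiv ℝ fEx ((t,((0:ℝ),(0:ℝ)))) ((1:ℝ),((0:ℝ),(0:ℝ)))) 0 := by
      exact (ContinuousLinearMap.apply ℝ (ℝ×ℝ×ℝ)
        (((1:ℝ),((0:ℝ),(0:ℝ))) : ℝ×ℝ×ℝ)).differentiableAt.comp 0 hcomp
    have heq : (fun t : ℝ =>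
        (fderiv ℝ fEx ((t,((0:ℝ),(0:ℝ)))) ((1:ℝ),((0:ℝ),(0:ℝ)))).2.1) = phi' := by
      funext t
      rw [fderiv_fEx, Lc_apply]
      simp
    rw [← heq]
    exact happ.snd.fst
  · -- the set-valued bracket
    intro x2 x3
    have hgd : fderiv ℝ gEx = fun _ => 0 := by
      funext w; exact fderiv_const_apply _
    set p : ℝ×ℝ×ℝ := ((0:ℝ), ((-3:ℝ), (0:ℝ))) with hp
    set q : ℝ×ℝ×ℝ := ((0:ℝ), ((-2:ℝ), (0:ℝ))) with hq
    set S : Set (ℝ×ℝ×ℝ) := {v | ∃ u w : ℕ → ℝ × ℝ × ℝ,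
      (∀ k, DifferentiableAt ℝ (lieBracket fEx gEx) (u k)) ∧
      (∀ k, DifferentiableAt ℝ gEx (w k)) ∧
      Tendsto u atTop (𝓝 ((0:ℝ),(x2,x3))) ∧ Tendsto w atTop (𝓝 ((0:ℝ),(x2,x3))) ∧
      Tendsto (fun k =>
        fderiv ℝ (lieBracket fEx gEx) (u k) (gEx (w k)) -
        fderiv ℝ gEx (w k) (lieBracket fEx gEx (u k))) atTop (𝓝 v)} with hS
    have termval : ∀ u w : ℕ → ℝ×ℝ×ℝ, (∀ k, DifferentiableAt ℝ (lieBracket fEx gEx) (u k)) →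
        ∀ k, (fderiv ℝ (lieBracket fEx gEx) (u k) (gEx (w k)) -
          fderiv ℝ gEx (w k) (lieBracket fEx gEx (u k))) ∈ ({p, q} : Set (ℝ×ℝ×ℝ)) := by
      intro u w hu k
      have hne : (u k).1 ≠ 0 := by
        intro h0
        exact not_diff_bEx h0 (hbr ▸ hu k)
      rw [hgd, hbr]
      simp only [ContinuousLinearMap.zero_apply, sub_zero]
      rcases hne.lt_or_gt with hlt | hgt
      · left
        rw [(hasFDerivAt_bEx_neg hlt).fderiv, Lc_apply]
        show (((0:ℝ), ((-3:ℝ) * (1:ℝ), (0:ℝ))) : ℝ×ℝ×ℝ) = p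
        rw [hp]; norm_num
      · right
        rw [(hasFDerivAt_bEx_pos hgt).fderiv, Lc_apply]
        show (((0:ℝ), ((-2:ℝ) * (1:ℝ), (0:ℝ))) : ℝ×ℝ×ℝ) ∈ ({q} : Set (ℝ×ℝ×ℝ))
        rw [hq]; norm_num
    have hSsub : S ⊆ ({p, q} : Set (ℝ×ℝ×ℝ)) := by
      rintro v ⟨u, w, hu, hw, hut, hwt, hlim⟩
      exact (Set.Finite.isClosed (Set.toFinite _)).mem_of_tendsto hlim
        (Filter.Eventually.of_forall (termval u w hu))
    -- p ∈ S and q ∈ S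
    have hseq : Tendsto (fun k : ℕ => (1:ℝ)/(k+1)) atTop (𝓝 0) :=
      tendsto_one_div_add_atTop_nhds_zero_nat
    have hpS : p ∈ S := by
      refine ⟨fun k => ((-(1/(k+1:ℝ))), (x2,x3)), fun _ => ((0:ℝ),(x2,x3)), ?_, ?_, ?_, ?_, ?_⟩
      · intro k
        rw [hbr]
        have hneg : (((-(1/(k+1:ℝ))), (x2,x3)) : ℝ×ℝ×ℝ).1 < 0 := by
          show -(1/(k+1:ℝ)) < 0
          have h0 : (0:ℝ) < 1/(k+1:ℝ) := by positivity
          linarith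
        exact (hasFDerivAt_bEx_neg hneg).differentiableAt
      · intro k
        exact differentiableAt_const _
      · have : Tendsto (fun k : ℕ => -(1/(k+1:ℝ))) atTop (𝓝 0) := by
          simpa using hseq.neg
        exact this.prodMk_nhds tendsto_const_nhds
      · exact tendsto_const_nhds
      · have hval : ∀ k : ℕ, (fderiv ℝ (lieBracket fEx gEx) ((-(1/(k+1:ℝ))), (x2,x3))
            (gEx ((0:ℝ),(x2,x3))) -
            fderiv ℝ gEx ((0:ℝ),(x2,x3)) (lieBracket fEx gEx ((-(1/(k+1:ℝ))), (x2,x3)))) = p := by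
          intro k
          have hneg : ((-(1/(k+1:ℝ)), (x2,x3)) : ℝ×ℝ×ℝ).1 < 0 := by
            show -(1/(k+1:ℝ)) < 0
            have : (0:ℝ) < 1/(k+1:ℝ) := by positivity
            linarith
          rw [hgd, hbr, (hasFDerivAt_bEx_neg hneg).fderiv]
          simp only [ContinuousLinearMap.zero_apply, sub_zero]
          rw [Lc_apply]
          show (((0:ℝ), ((-3:ℝ) * (1:ℝ), (0:ℝ))) : ℝ×ℝ×ℝ) = p
          rw [hp]; norm_num
        exact Tendsto.congr (fun k => (hval k).symm) tendsto_const_nhds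
    have hqS : q ∈ S := by
      refine ⟨fun k => ((1/(k+1:ℝ)), (x2,x3)), fun _ => ((0:ℝ),(x2,x3)), ?_, ?_, ?_, ?_, ?_⟩
      · intro k
        rw [hbr]
        have hpos : (((1/(k+1:ℝ)), (x2,x3)) : ℝ×ℝ×ℝ).1 > 0 := by
          show (0:ℝ) < 1/(k+1:ℝ); positivity
        exact (hasFDerivAt_bEx_pos hpos).differentiableAt
      · intro k
        exact differentiableAt_const _
      · exact hseq.prodMk_nhds tendsto_const_nhds
      · exact tendsto_const_nhds
      · have hval : ∀ k : ℕ, (fderiv ℝ (lieBracket fEx gEx) ((1/(k+1:ℝ)), (x2,x3))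
            (gEx ((0:ℝ),(x2,x3))) -
            fderiv ℝ gEx ((0:ℝ),(x2,x3)) (lieBracket fEx gEx ((1/(k+1:ℝ)), (x2,x3)))) = q := by
          intro k
          have hpos : (((1/(k+1:ℝ)), (x2,x3)) : ℝ×ℝ×ℝ).1 > 0 := by
            show (0:ℝ) < 1/(k+1:ℝ); positivity
          rw [hgd, hbr, (hasFDerivAt_bEx_pos hpos).fderiv]
          simp only [ContinuousLinearMap.zero_apply, sub_zero]
          rw [Lc_apply]
          show (((0:ℝ), ((-2:ℝ) * (1:ℝ), (0:ℝ))) : ℝ×ℝ×ℝ) = q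
          rw [hq]; norm_num
        exact Tendsto.congr (fun k => (hval k).symm) tendsto_const_nhds
    -- target set
    have hTconv : Convex ℝ {v : ℝ × ℝ × ℝ | ∃ α ∈ Icc (-3:ℝ) (-2), v = (0, (α, 0))} := by
      rintro v ⟨α, hα, rfl⟩ v' ⟨β, hβ, rfl⟩ a b ha hb hab
      refine ⟨a*α + b*β, convex_Icc (-3:ℝ) (-2) hα hβ ha hb hab, ?_⟩
      simp [Prod.ext_iff, smul_eq_mul]
    show setLieBracket3 fEx gEx gEx ((0:ℝ), (x2, x3)) = _
    rw [show setLieBracket3 fEx gEx gEx ((0:ℝ), (x2, x3)) = convexHull ℝ S from rfl]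
    apply Subset.antisymm
    · apply convexHull_min _ hTconv
      intro v hv
      rcases hSsub hv with h | h
      · exact ⟨-3, ⟨le_refl _, by norm_num⟩, by rw [h]⟩
      · exact ⟨-2, ⟨by norm_num, le_refl _⟩, by rw [h]⟩
    · rintro v ⟨α, hα, rfl⟩
      have hmem := (convex_convexHull ℝ S)
        (subset_convexHull ℝ S hpS) (subset_convexHull ℝ S hqS)
        (a := -2-α) (b := α+3) (by linarith [hα.2]) (by linarith [hα.1]) (by ring)
      have : (-2-α) • p + (α+3) • q = ((0:ℝ), (α, (0:ℝ))) := by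
        rw [hp, hq]
        simp [Prod.ext_iff, smul_eq_mul]
        ring
      rwa [this] at hmem
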